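/- As formal power series in x over ℚ with t defined implicitly by t(1−t)² = x and t(0)=0, the identity 2t²(1−2t)/((1−3t)³(1−t)) = (2/3)·(d/dx)(t³/(1−3t)) holds, and consequently the coefficient of x^n in 2t²(1−2t)/((1−3t)³(1−t)) equals n·C(3n−1, n−2) for all n ≥ 2. -/

import Mathlib

open PowerSeries

set_option maxHeartbeats 4000000

theorem stmt_19 (t : PowerSeries ℚ) (h0 : constantCoeff (R := ℚ) t = 0)
    (ht : t * (1 - t) ^ 2 = X) :
    2 * t ^ 2 * (1 - 2 * t) * ((1 - 3 * t) ^ 3 * (1 - t))⁻¹ =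
        (PowerSeries.C (R := ℚ) (2 / 3)) * derivative ℚ (t ^ 3 * (1 - 3 * t)⁻¹) ∧
      ∀ n : ℕ, 2 ≤ n →
        coeff (R := ℚ) n (2 * t ^ 2 * (1 - 2 * t) * ((1 - 3 * t) ^ 3 * (1 - t))⁻¹) =
          n * Nat.choose (3 * n - 1) (n - 2) := by
  have hccP : constantCoeff (R := ℚ) (1 - t) = 1 := by simp [h0]
  have hccQ : constantCoeff (R := ℚ) (1 - 3*t) = 1 := by simp [h0]
  have hccI : constantCoeff (R := ℚ) ((1 - 3*t)^3 * (1 - t)) = 1 := by simp [h0]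
  have hV : (1 - t) * (1 - t)⁻¹ = 1 := PowerSeries.mul_inv_cancel _ (by rw [hccP]; norm_num)
  have hW : (1 - 3*t) * (1 - 3*t)⁻¹ = 1 := PowerSeries.mul_inv_cancel _ (by rw [hccQ]; norm_num)
  have hI : ((1 - 3*t)^3 * (1 - t)) * ((1 - 3*t)^3 * (1 - t))⁻¹ = 1 :=
    PowerSeries.mul_inv_cancel _ (by rw [hccI]; norm_num)
  have hD3 : derivative ℚ (3:ℚ⟦X⟧) = 0 := by
    rw [show (3:ℚ⟦X⟧) = ((3:ℕ):ℚ⟦X⟧) by norm_num]; exact Derivation.map_natCast _ 3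
  have hD6 : derivative ℚ (6:ℚ⟦X⟧) = 0 := by
    rw [show (6:ℚ⟦X⟧) = ((6:ℕ):ℚ⟦X⟧) by norm_num]; exact Derivation.map_natCast _ 6
  have hD27 : derivative ℚ (27:ℚ⟦X⟧) = 0 := by
    rw [show (27:ℚ⟦X⟧) = ((27:ℕ):ℚ⟦X⟧) by norm_num]; exact Derivation.map_natCast _ 27
  have h1 : derivative ℚ t * ((1 - t) * (1 - 3*t)) = 1 := by
    have h := congrArg (derivative ℚ) ht
    rw [derivative_X] at h
    simp only [Derivation.leibniz, Derivation.leibniz_pow, map_sub, map_one,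
      smul_eq_mul, Derivation.map_one_eq_zero, nsmul_eq_mul] at h
    linear_combination h
  have hd1 : derivative ℚ t = (1-t)⁻¹ * (1-3*t)⁻¹ := by
    linear_combination ((1-t)⁻¹*(1-3*t)⁻¹) * h1
      - (derivative ℚ t*((1-t)*(1-t)⁻¹)) * hW - (derivative ℚ t) * hV
  have hdV : derivative ℚ ((1-t)⁻¹) = (1-t)⁻¹^3 * (1-3*t)⁻¹ := by
    rw [derivative_inv', map_sub, Derivation.map_one_eq_zero, hd1]
    ring
  have hdW : derivative ℚ ((1-3*t)⁻¹) = 3*(1-t)⁻¹*(1-3*t)⁻¹^3 := by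
    rw [derivative_inv', map_sub, Derivation.map_one_eq_zero, Derivation.leibniz, hD3, hd1]
    simp only [smul_eq_mul]
    ring
  have hf1 : derivative ℚ (t^3*(1-3*t)⁻¹) = 3*t^3*(1-t)⁻¹*(1-3*t)⁻¹^3 + 3*t^2*(1-t)⁻¹*(1-3*t)⁻¹^2 := by
    rw [Derivation.leibniz, Derivation.leibniz_pow, hdW, hd1]
    simp only [smul_eq_mul, nsmul_eq_mul]
    push_cast
    norm_num
    ring
  have hf2 : derivative ℚ (derivative ℚ (t^3*(1-3*t)⁻¹)) = 3*t^3*(1-t)⁻¹^3*(1-3*t)⁻¹^4 + 27*t^3*(1-t)⁻¹^2*(1-3*t)⁻¹^5 + 3*t^2*(1-t)⁻¹^3*(1-3*t)⁻¹^3 + 27*t^2*(1-t)⁻¹^2*(1-3*t)⁻¹^4 + 6*t*(1-t)⁻¹^2*(1-3*t)⁻¹^3 := by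
    rw [hf1]
    simp only [map_add, Derivation.leibniz, Derivation.leibniz_pow, hdW, hdV, hd1, hD3,
      Derivation.map_one_eq_zero, smul_eq_mul, nsmul_eq_mul]
    push_cast
    norm_num
    ring
  have hf3 : derivative ℚ (derivative ℚ (derivative ℚ (t^3*(1-3*t)⁻¹))) = 9*t^3*(1-t)⁻¹^5*(1-3*t)⁻¹^5 + 90*t^3*(1-t)⁻¹^4*(1-3*t)⁻¹^6 + 405*t^3*(1-t)⁻¹^3*(1-3*t)⁻¹^7 + 9*t^2*(1-t)⁻¹^5*(1-3*t)⁻¹^4 + 90*t^2*(1-t)⁻¹^4*(1-3*t)⁻¹^5 + 405*t^2*(1-t)⁻¹^3*(1-3*t)⁻¹^6 + 18*t*(1-t)⁻¹^4*(1-3*t)⁻¹^4 + 108*t*(1-t)⁻¹^3*(1-3*t)⁻¹^5 + 6*(1-t)⁻¹^3*(1-3*t)⁻¹^4 := by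
    rw [hf2]
    simp only [map_add, Derivation.leibniz, Derivation.leibniz_pow, hdW, hdV, hd1, hD3, hD6, hD27,
      Derivation.map_one_eq_zero, smul_eq_mul, nsmul_eq_mul]
    push_cast
    norm_num
    ring
  have hIv : ((1 - 3*t)^3 * (1 - t))⁻¹ = (1-t)⁻¹ * (1-3*t)⁻¹^3 := by
    linear_combination ((1-t)⁻¹*(1-3*t)⁻¹^3) * hI
      - (((1-3*t)^3*(1-t))⁻¹*((1-t)*(1-t)⁻¹)*(((1-3*t)*(1-3*t)⁻¹)^2 + (1-3*t)*(1-3*t)⁻¹ + 1)) * hW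
      - (((1-3*t)^3*(1-t))⁻¹) * hV
  have hc : (PowerSeries.C (R := ℚ) (2/3)) * 3 = 2 := by
    rw [show (3:ℚ⟦X⟧) = PowerSeries.C (R := ℚ) 3 from (map_ofNat (C (R := ℚ)) 3).symm, ← map_mul]
    norm_num
    exact (map_ofNat (C (R := ℚ)) 2)
  have h3ne : (3:ℚ⟦X⟧) ≠ 0 := by
    intro h
    have := congrArg (constantCoeff (R := ℚ)) h
    simp only [map_ofNat, map_zero] at this
    norm_num at this
  have part1 : 2 * t ^ 2 * (1 - 2 * t) * ((1 - 3 * t) ^ 3 * (1 - t))⁻¹ =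
      (PowerSeries.C (R := ℚ) (2 / 3)) * derivative ℚ (t ^ 3 * (1 - 3 * t)⁻¹) := by
    apply mul_left_cancel₀ h3ne
    rw [hIv, hf1]
    linear_combination (18*t^2*(1-3*t)⁻¹^3 + 12*t*(1-3*t)⁻¹^3 + 6*t*(1-3*t)⁻¹^2 - 6*(1-3*t)⁻¹^3 + 6*(1-3*t)⁻¹^2) * hV + (-6*t*(1-3*t)⁻¹^2 + 6*(1-t)⁻¹*(1-3*t)⁻¹^2 - 6*(1-3*t)⁻¹^2) * hW
      - (3*t^3*(1-t)⁻¹*(1-3*t)⁻¹^3 + 3*t^2*(1-t)⁻¹*(1-3*t)⁻¹^2) * hc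
  have hODE : (PowerSeries.C (R := ℚ) 4) * (X^3 * (derivative ℚ (derivative ℚ (derivative ℚ (t^3*(1-3*t)⁻¹))))) - (PowerSeries.C (R := ℚ) 2) * (X^2 * (derivative ℚ (derivative ℚ (t^3*(1-3*t)⁻¹))))
        - (PowerSeries.C (R := ℚ) 4) * (X * (derivative ℚ (t^3*(1-3*t)⁻¹)))
      = (PowerSeries.C (R := ℚ) 27) * (X^4 * (derivative ℚ (derivative ℚ (derivative ℚ (t^3*(1-3*t)⁻¹))))) + (PowerSeries.C (R := ℚ) 54) * (X^3 * (derivative ℚ (derivative ℚ (t^3*(1-3*t)⁻¹))))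
        + (PowerSeries.C (R := ℚ) 6) * (X^2 * (derivative ℚ (t^3*(1-3*t)⁻¹))) := by
    rw [hf3, hf2, hf1, ← ht]
    simp only [map_ofNat]
    linear_combination (243*t^14*(1-t)⁻¹^4*(1-3*t)⁻¹^5 + 2430*t^14*(1-t)⁻¹^3*(1-3*t)⁻¹^6 + 10935*t^14*(1-t)⁻¹^2*(1-3*t)⁻¹^7 - 1701*t^13*(1-t)⁻¹^4*(1-3*t)⁻¹^5 + 243*t^13*(1-t)⁻¹^4*(1-3*t)⁻¹^4 - 17010*t^13*(1-t)⁻¹^3*(1-3*t)⁻¹^6 + 2187*t^13*(1-t)⁻¹^3*(1-3*t)⁻¹^5 - 76545*t^13*(1-t)⁻¹^2*(1-3*t)⁻¹^7 + 8505*t^13*(1-t)⁻¹^2*(1-3*t)⁻¹^6 - 10935*t^13*(1-t)⁻¹*(1-3*t)⁻¹^7 + 5103*t^12*(1-t)⁻¹^4*(1-3*t)⁻¹^5 - 1701*t^12*(1-t)⁻¹^4*(1-3*t)⁻¹^4 + 51030*t^12*(1-t)⁻¹^3*(1-3*t)⁻¹^6 - 15552*t^12*(1-t)⁻¹^3*(1-3*t)⁻¹^5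 + 243*t^12*(1-t)⁻¹^3*(1-3*t)⁻¹^4 + 229635*t^12*(1-t)⁻¹^2*(1-3*t)⁻¹^7 - 61965*t^12*(1-t)⁻¹^2*(1-3*t)⁻¹^6 + 729*t^12*(1-t)⁻¹^2*(1-3*t)⁻¹^5 + 65610*t^12*(1-t)⁻¹*(1-3*t)⁻¹^7 - 8505*t^12*(1-t)⁻¹*(1-3*t)⁻¹^6 + 10935*t^12*(1-3*t)⁻¹^7 - 8541*t^11*(1-t)⁻¹^4*(1-3*t)⁻¹^5 + 5103*t^11*(1-t)⁻¹^4*(1-3*t)⁻¹^4 - 85410*t^11*(1-t)⁻¹^3*(1-3*t)⁻¹^6 + 47385*t^11*(1-t)⁻¹^3*(1-3*t)⁻¹^5 - 1944*t^11*(1-t)⁻¹^3*(1-3*t)⁻¹^4 - 384345*t^11*(1-t)⁻¹^2*(1-3*t)⁻¹^7 + 193185*t^11*(1-t)⁻¹^2*(1-3*t)⁻¹^6 - 7047*t^11*(1-t)⁻¹^2*(1-3*t)⁻¹^5 + 81*t^11*(1-t)⁻¹^2*(1-3*t)⁻¹^4 - 164025*t^11*(1-t)⁻¹*(1-3*t)⁻¹^7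 + 53460*t^11*(1-t)⁻¹*(1-3*t)⁻¹^6 + 729*t^11*(1-t)⁻¹*(1-3*t)⁻¹^5 - 54675*t^11*(1-3*t)⁻¹^7 + 8505*t^11*(1-3*t)⁻¹^6 + 8685*t^10*(1-t)⁻¹^4*(1-3*t)⁻¹^5 - 8541*t^10*(1-t)⁻¹^4*(1-3*t)⁻¹^4 + 86850*t^10*(1-t)⁻¹^3*(1-3*t)⁻¹^6 - 80514*t^10*(1-t)⁻¹^3*(1-3*t)⁻¹^5 + 6561*t^10*(1-t)⁻¹^3*(1-3*t)⁻¹^4 + 390825*t^10*(1-t)⁻¹^2*(1-3*t)⁻¹^7 - 335385*t^10*(1-t)⁻¹^2*(1-3*t)⁻¹^6 + 27216*t^10*(1-t)⁻¹^2*(1-3*t)⁻¹^5 - 243*t^10*(1-t)⁻¹^2*(1-3*t)⁻¹^4 + 162*t^10*(1-t)⁻¹^2*(1-3*t)⁻¹^3 + 220320*t^10*(1-t)⁻¹*(1-3*t)⁻¹^7 - 139725*t^10*(1-t)⁻¹*(1-3*t)⁻¹^6 - 972*t^10*(1-t)⁻¹*(1-3*t)⁻¹^5 + 1377*t^10*(1-t)⁻¹*(1-3*t)⁻¹^4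 + 109350*t^10*(1-3*t)⁻¹^7 - 44955*t^10*(1-3*t)⁻¹^6 - 729*t^10*(1-3*t)⁻¹^5 - 5463*t^9*(1-t)⁻¹^4*(1-3*t)⁻¹^5 + 8685*t^9*(1-t)⁻¹^4*(1-3*t)⁻¹^4 - 54630*t^9*(1-t)⁻¹^3*(1-3*t)⁻¹^6 + 83061*t^9*(1-t)⁻¹^3*(1-3*t)⁻¹^5 - 12186*t^9*(1-t)⁻¹^3*(1-3*t)⁻¹^4 - 245835*t^9*(1-t)⁻¹^2*(1-3*t)⁻¹^7 + 352935*t^9*(1-t)⁻¹^2*(1-3*t)⁻¹^6 - 55998*t^9*(1-t)⁻¹^2*(1-3*t)⁻¹^5 + 162*t^9*(1-t)⁻¹^2*(1-3*t)⁻¹^4 - 810*t^9*(1-t)⁻¹^2*(1-3*t)⁻¹^3 - 170505*t^9*(1-t)⁻¹*(1-3*t)⁻¹^7 + 195660*t^9*(1-t)⁻¹*(1-3*t)⁻¹^6 - 6318*t^9*(1-t)⁻¹*(1-3*t)⁻¹^5 - 7128*t^9*(1-t)⁻¹*(1-3*t)⁻¹^4 + 162*t^9*(1-t)⁻¹*(1-3*t)⁻¹^3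 - 110970*t^9*(1-3*t)⁻¹^7 + 94770*t^9*(1-3*t)⁻¹^6 + 243*t^9*(1-3*t)⁻¹^5 - 1377*t^9*(1-3*t)⁻¹^4 + 2061*t^8*(1-t)⁻¹^4*(1-3*t)⁻¹^5 - 5463*t^8*(1-t)⁻¹^4*(1-3*t)⁻¹^4 + 20610*t^8*(1-t)⁻¹^3*(1-3*t)⁻¹^6 - 52956*t^8*(1-t)⁻¹^3*(1-3*t)⁻¹^5 + 13581*t^8*(1-t)⁻¹^3*(1-3*t)⁻¹^4 + 92745*t^8*(1-t)⁻¹^2*(1-3*t)⁻¹^7 - 229095*t^8*(1-t)⁻¹^2*(1-3*t)⁻¹^6 + 67653*t^8*(1-t)⁻¹^2*(1-3*t)⁻¹^5 + 18*t^8*(1-t)⁻¹^2*(1-3*t)⁻¹^4 + 1620*t^8*(1-t)⁻¹^2*(1-3*t)⁻¹^3 + 75330*t^8*(1-t)⁻¹*(1-3*t)⁻¹^7 - 157275*t^8*(1-t)⁻¹*(1-3*t)⁻¹^6 + 20574*t^8*(1-t)⁻¹*(1-3*t)⁻¹^5 + 14580*t^8*(1-t)⁻¹*(1-3*t)⁻¹^4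 - 972*t^8*(1-t)⁻¹*(1-3*t)⁻¹^3 + 59535*t^8*(1-3*t)⁻¹^7 - 100890*t^8*(1-3*t)⁻¹^6 + 6561*t^8*(1-3*t)⁻¹^5 + 5751*t^8*(1-3*t)⁻¹^4 - 144*t^8*(1-3*t)⁻¹^3 - 423*t^7*(1-t)⁻¹^4*(1-3*t)⁻¹^5 + 2061*t^7*(1-t)⁻¹^4*(1-3*t)⁻¹^4 - 4230*t^7*(1-t)⁻¹^3*(1-3*t)⁻¹^6 + 20223*t^7*(1-t)⁻¹^3*(1-3*t)⁻¹^5 - 9252*t^7*(1-t)⁻¹^3*(1-3*t)⁻¹^4 - 19035*t^7*(1-t)⁻¹^2*(1-3*t)⁻¹^7 + 88875*t^7*(1-t)⁻¹^2*(1-3*t)⁻¹^6 - 49167*t^7*(1-t)⁻¹^2*(1-3*t)⁻¹^5 + 327*t^7*(1-t)⁻¹^2*(1-3*t)⁻¹^4 - 1614*t^7*(1-t)⁻¹^2*(1-3*t)⁻¹^3 - 17415*t^7*(1-t)⁻¹*(1-3*t)⁻¹^7 + 71820*t^7*(1-t)⁻¹*(1-3*t)⁻¹^6 - 25425*t^7*(1-t)⁻¹*(1-3*t)⁻¹^5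 - 14544*t^7*(1-t)⁻¹*(1-3*t)⁻¹^4 + 2268*t^7*(1-t)⁻¹*(1-3*t)⁻¹^3 - 15795*t^7*(1-3*t)⁻¹^7 + 56385*t^7*(1-3*t)⁻¹^6 - 14013*t^7*(1-3*t)⁻¹^5 - 8829*t^7*(1-3*t)⁻¹^4 + 756*t^7*(1-3*t)⁻¹^3 + 18*t^7*(1-3*t)⁻¹^2 + 36*t^6*(1-t)⁻¹^4*(1-3*t)⁻¹^5 - 423*t^6*(1-t)⁻¹^4*(1-3*t)⁻¹^4 + 360*t^6*(1-t)⁻¹^3*(1-3*t)⁻¹^6 - 4194*t^6*(1-t)⁻¹^3*(1-3*t)⁻¹^5 + 3735*t^6*(1-t)⁻¹^3*(1-3*t)⁻¹^4 + 1620*t^6*(1-t)⁻¹^2*(1-3*t)⁻¹^7 - 18675*t^6*(1-t)⁻¹^2*(1-3*t)⁻¹^6 + 20898*t^6*(1-t)⁻¹^2*(1-3*t)⁻¹^5 - 789*t^6*(1-t)⁻¹^2*(1-3*t)⁻¹^4 + 792*t^6*(1-t)⁻¹^2*(1-3*t)⁻¹^3 + 1620*t^6*(1-t)⁻¹*(1-3*t)⁻¹^7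 - 17055*t^6*(1-t)⁻¹*(1-3*t)⁻¹^6 + 15318*t^6*(1-t)⁻¹*(1-3*t)⁻¹^5 + 6783*t^6*(1-t)⁻¹*(1-3*t)⁻¹^4 - 2586*t^6*(1-t)⁻¹*(1-3*t)⁻¹^3 + 1620*t^6*(1-3*t)⁻¹^7 - 15435*t^6*(1-3*t)⁻¹^6 + 11412*t^6*(1-3*t)⁻¹^5 + 5715*t^6*(1-3*t)⁻¹^4 - 1404*t^6*(1-3*t)⁻¹^3 - 54*t^6*(1-3*t)⁻¹^2 + 36*t^5*(1-t)⁻¹^4*(1-3*t)⁻¹^4 + 360*t^5*(1-t)⁻¹^3*(1-3*t)⁻¹^5 - 810*t^5*(1-t)⁻¹^3*(1-3*t)⁻¹^4 + 1620*t^5*(1-t)⁻¹^2*(1-3*t)⁻¹^6 - 4716*t^5*(1-t)⁻¹^2*(1-3*t)⁻¹^5 + 630*t^5*(1-t)⁻¹^2*(1-3*t)⁻¹^4 - 144*t^5*(1-t)⁻¹^2*(1-3*t)⁻¹^3 + 1620*t^5*(1-t)⁻¹*(1-3*t)⁻¹^6 - 4338*t^5*(1-t)⁻¹*(1-3*t)⁻¹^5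 - 852*t^5*(1-t)⁻¹*(1-3*t)⁻¹^4 + 1434*t^5*(1-t)⁻¹*(1-3*t)⁻¹^3 + 1620*t^5*(1-3*t)⁻¹^6 - 3906*t^5*(1-3*t)⁻¹^5 - 1068*t^5*(1-3*t)⁻¹^4 + 1122*t^5*(1-3*t)⁻¹^3 + 54*t^5*(1-3*t)⁻¹^2 + 72*t^4*(1-t)⁻¹^3*(1-3*t)⁻¹^4 + 432*t^4*(1-t)⁻¹^2*(1-3*t)⁻¹^5 - 210*t^4*(1-t)⁻¹^2*(1-3*t)⁻¹^4 - 6*t^4*(1-t)⁻¹^2*(1-3*t)⁻¹^3 + 432*t^4*(1-t)⁻¹*(1-3*t)⁻¹^5 - 240*t^4*(1-t)⁻¹*(1-3*t)⁻¹^4 - 294*t^4*(1-t)⁻¹*(1-3*t)⁻¹^3 + 432*t^4*(1-3*t)⁻¹^5 - 216*t^4*(1-3*t)⁻¹^4 - 318*t^4*(1-3*t)⁻¹^3 - 6*t^4*(1-3*t)⁻¹^2 + 24*t^3*(1-t)⁻¹^2*(1-3*t)⁻¹^4 + 24*t^3*(1-t)⁻¹*(1-3*t)⁻¹^4 - 12*t^3*(1-t)⁻¹*(1-3*t)⁻¹^3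 + 24*t^3*(1-3*t)⁻¹^4 - 12*t^3*(1-3*t)⁻¹^3 - 12*t^3*(1-3*t)⁻¹^2) * hV + (-3645*t^11*(1-3*t)⁻¹^6 + 17010*t^10*(1-3*t)⁻¹^6 - 1620*t^10*(1-3*t)⁻¹^5 - 30780*t^9*(1-3*t)⁻¹^6 + 8775*t^9*(1-3*t)⁻¹^5 + 783*t^9*(1-3*t)⁻¹^4 + 26730*t^8*(1-3*t)⁻¹^6 - 18405*t^8*(1-3*t)⁻¹^5 - 2745*t^8*(1-3*t)⁻¹^4 + 198*t^8*(1-3*t)⁻¹^3 - 10935*t^7*(1-3*t)⁻¹^6 + 18585*t^7*(1-3*t)⁻¹^5 + 3033*t^7*(1-3*t)⁻¹^4 - 936*t^7*(1-3*t)⁻¹^3 - 18*t^7*(1-3*t)⁻¹^2 + 1620*t^6*(1-3*t)⁻¹^6 - 8955*t^6*(1-3*t)⁻¹^5 - 513*t^6*(1-3*t)⁻¹^4 + 1620*t^6*(1-3*t)⁻¹^3 + 54*t^6*(1-3*t)⁻¹^2 + 1620*t^5*(1-3*t)⁻¹^5 - 990*t^5*(1-3*t)⁻¹^4 - 1194*t^5*(1-3*t)⁻¹^3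 - 54*t^5*(1-3*t)⁻¹^2 + 432*t^4*(1-3*t)⁻¹^4 + 288*t^4*(1-3*t)⁻¹^3 + 6*t^4*(1-3*t)⁻¹^2 + 24*t^3*(1-3*t)⁻¹^3 + 12*t^3*(1-3*t)⁻¹^2) * hW
  have hrec : ∀ k : ℕ, (2*((k:ℚ)+4)*(2*(k:ℚ)+7)*((k:ℚ)+1)) * coeff (R := ℚ) (k+4) (t^3*(1-3*t)⁻¹)
      = (3*((k:ℚ)+3)*(3*(k:ℚ)+8)*(3*(k:ℚ)+7)) * coeff (R := ℚ) (k+3) (t^3*(1-3*t)⁻¹) := by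
    intro k
    have E1 : coeff (R := ℚ) (k+4) (X^3 * (derivative ℚ (derivative ℚ (derivative ℚ (t^3*(1-3*t)⁻¹)))))
        = coeff (R := ℚ) (k+4) (t^3*(1-3*t)⁻¹) * (((k:ℚ)+4)*((k:ℚ)+3)*((k:ℚ)+2)) := by
      rw [show k+4 = (k+1)+3 by omega, coeff_X_pow_mul, coeff_derivative,
        show (k+1)+1 = k+2 by omega, coeff_derivative, show (k+2)+1 = k+3 by omega,
        coeff_derivative, show (k+3)+1 = (k+1)+3 by omega]
      push_cast
      ring
    have E2 : coeff (R := ℚ) (k+4) (X^2 * (derivative ℚ (derivative ℚ (t^3*(1-3*t)⁻¹))))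
        = coeff (R := ℚ) (k+4) (t^3*(1-3*t)⁻¹) * (((k:ℚ)+4)*((k:ℚ)+3)) := by
      rw [show k+4 = (k+2)+2 by omega, coeff_X_pow_mul, coeff_derivative,
        show (k+2)+1 = k+3 by omega, coeff_derivative, show (k+3)+1 = (k+2)+2 by omega]
      push_cast
      ring
    have E3 : coeff (R := ℚ) (k+4) (X * (derivative ℚ (t^3*(1-3*t)⁻¹)))
        = coeff (R := ℚ) (k+4) (t^3*(1-3*t)⁻¹) * ((k:ℚ)+4) := by
      rw [show k+4 = (k+3)+1 by omega, coeff_succ_X_mul, coeff_derivative]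
      push_cast
      ring
    have E4 : coeff (R := ℚ) (k+4) (X^4 * (derivative ℚ (derivative ℚ (derivative ℚ (t^3*(1-3*t)⁻¹)))))
        = coeff (R := ℚ) (k+3) (t^3*(1-3*t)⁻¹) * (((k:ℚ)+3)*((k:ℚ)+2)*((k:ℚ)+1)) := by
      rw [coeff_X_pow_mul, coeff_derivative, coeff_derivative, show (k+1)+1 = k+2 by omega,
        coeff_derivative, show (k+2)+1 = k+3 by omega]
      push_cast
      ring
    have E5 : coeff (R := ℚ) (k+4) (X^3 * (derivative ℚ (derivative ℚ (t^3*(1-3*t)⁻¹))))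
        = coeff (R := ℚ) (k+3) (t^3*(1-3*t)⁻¹) * (((k:ℚ)+3)*((k:ℚ)+2)) := by
      rw [show k+4 = (k+1)+3 by omega, coeff_X_pow_mul, coeff_derivative,
        show (k+1)+1 = k+2 by omega, coeff_derivative, show (k+2)+1 = k+3 by omega]
      push_cast
      ring
    have E6 : coeff (R := ℚ) (k+4) (X^2 * (derivative ℚ (t^3*(1-3*t)⁻¹)))
        = coeff (R := ℚ) (k+3) (t^3*(1-3*t)⁻¹) * ((k:ℚ)+3) := by
      rw [show k+4 = (k+2)+2 by omega, coeff_X_pow_mul, coeff_derivative,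
        show (k+2)+1 = k+3 by omega]
      push_cast
      ring
    have hco := congrArg (coeff (R := ℚ) (k+4)) hODE
    simp only [map_sub, map_add, coeff_C_mul] at hco
    rw [E1, E2, E3, E4, E5, E6] at hco
    linear_combination hco
  have ha3 : coeff (R := ℚ) 3 (t^3*(1-3*t)⁻¹) = 1 := by
    obtain ⟨r, hr⟩ := (PowerSeries.X_dvd_iff).2 h0
    have hccr : constantCoeff (R := ℚ) r = 1 := by
      have h := congrArg (coeff (R := ℚ) 1) ht
      rw [coeff_one_X] at h
      rw [hr, show X*r*(1-X*r)^2 = X*(r*(1-X*r)^2) by ring,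
        show (1:ℕ) = 0+1 from rfl, coeff_succ_X_mul, coeff_zero_eq_constantCoeff] at h
      simp only [map_mul, map_pow, map_sub, map_one, constantCoeff_X, zero_mul, sub_zero,
        one_pow, mul_one] at h
      exact h
    have hx := coeff_X_pow_mul (r^3*(1-3*(X*r))⁻¹) 3 0
    norm_num at hx
    rw [hr, show (X*r)^3*(1-3*(X*r))⁻¹ = X^3*(r^3*(1-3*(X*r))⁻¹) by ring, hx, hccr]
    norm_num
  have auxL : ∀ M j : ℕ, (M+1-j) * Nat.choose (M+1) j = (M+1) * Nat.choose M j := by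
    intro M j
    calc (M+1-j) * Nat.choose (M+1) j = Nat.choose (M+1) j * ((M+1)-j) := by rw [Nat.mul_comm]
    _ = Nat.choose (M+1) (j+1) * (j+1) := (Nat.choose_succ_right_eq (M+1) j).symm
    _ = (M+1) * Nat.choose M j := (Nat.add_one_mul_choose_eq M j).symm
  have key : ∀ k : ℕ, coeff (R := ℚ) (k+3) (t^3*(1-3*t)⁻¹) = Nat.choose (3*k+6) k := by
    intro k
    induction k with
    | zero => simpa using ha3
    | succ n ih =>
      have h := hrec n
      rw [show n+4 = (n+1)+3 by omega] at h
      rw [ih] at h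
      have hne : (2*((n:ℚ)+4)*(2*(n:ℚ)+7)*((n:ℚ)+1)) ≠ 0 := by positivity
      apply mul_left_cancel₀ hne
      rw [h]
      rw [show 3*(n+1)+6 = 3*n+9 by omega]
      have l1 := auxL (3*n+8) (n+1)
      have l2 := auxL (3*n+7) (n+1)
      have l3 := Nat.add_one_mul_choose_eq (3*n+6) n
      try simp only [Nat.succ_eq_add_one] at l3
      rw [show 3*n+8+1-(n+1) = 2*n+8 by omega, show 3*n+8+1 = 3*n+9 by omega] at l1
      rw [show 3*n+7+1-(n+1) = 2*n+7 by omega, show 3*n+7+1 = 3*n+8 by omega] at l2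
      rw [show (3*n+6)+1 = 3*n+7 by omega] at l3
      have l1q := congrArg (fun m : ℕ => (m:ℚ)) l1
      have l2q := congrArg (fun m : ℕ => (m:ℚ)) l2
      have l3q := congrArg (fun m : ℕ => (m:ℚ)) l3
      push_cast at l1q l2q l3q
      push_cast
      linear_combination ((3*(n:ℚ)+9)*(3*(n:ℚ)+8))*l3q - (((n:ℚ)+1)*(2*(n:ℚ)+7))*l1q
        - (((n:ℚ)+1)*(3*(n:ℚ)+9))*l2q
  constructor
  · exact part1
  · intro n hn
    obtain ⟨m, rfl⟩ : ∃ m, n = m+2 := ⟨n-2, by omega⟩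
    rw [part1, coeff_C_mul, coeff_derivative, show m+2+1 = m+3 by omega, key m]
    rw [show 3*(m+2)-1 = 3*m+5 by omega, show (m+2)-2 = m by omega]
    have l := auxL (3*m+5) m
    rw [show 3*m+5+1-m = 2*m+6 by omega, show 3*m+5+1 = 3*m+6 by omega] at l
    have lq := congrArg (fun x : ℕ => (x:ℚ)) l
    push_cast at lq
    push_cast
    linear_combination (1/3 : ℚ) * lq
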